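/- arXiv:1502.00357 — 3 statements merged into one kernel-verified Lean document; each statement's English description precedes it below -/
import Mathlib

section
/- (Transitivity) Let f : {0,1}^n → {0,1} be a Boolean function and let i, j, k ∈ [n] be pairwise distinct indices. If there are bits b_i, b_j ∈ {0,1} such that j ∈ U(f_{i b_i}) and k ∈ U(f_{j b_j}), then k ∈ U(f_{i b_i}). -/
/-- `f` depends on variable `i`: flipping the `i`-th coordinate of some input changes the value. -/
def BoolDependsOn {ι : Type*} [DecidableEq ι] (f : (ι → Bool) → Bool) (i : ι) : Prop :=
  ∃ a : ι → Bool, f (Function.update a i (!a i)) ≠ f a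

/-- The restriction `f|_{x_j = b}`, a Boolean function on the remaining variables. -/
def restrictBit {ι : Type*} [DecidableEq ι] (f : (ι → Bool) → Bool) (j : ι) (b : Bool) :
    ({i : ι // i ≠ j} → Bool) → Bool :=
  fun y => f (fun i => if h : i = j then b else y ⟨i, h⟩)

/-- `k ∈ U(f_{jb})`: variable `k` (a variable of `f_{jb}`, i.e. `k ≠ j`) is useless for the
restriction `f_{jb}`. -/
def UselessIn {ι : Type*} [DecidableEq ι] (f : (ι → Bool) → Bool) (j : ι) (b : Bool)
    (k : ι) : Prop :=
  ∃ h : k ≠ j, ¬ BoolDependsOn (restrictBit f j b) ⟨k, h⟩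

lemma useless_iff {ι : Type*} [DecidableEq ι] (f : (ι → Bool) → Bool) (i : ι) (b : Bool)
    (k : ι) (h : k ≠ i) :
    (¬ BoolDependsOn (restrictBit f i b) ⟨k, h⟩) ↔
      ∀ a : ι → Bool, a i = b → f (Function.update a k (!a k)) = f a := by
  unfold BoolDependsOn restrictBit
  push_neg
  constructor
  · intro H a ha
    have := H (fun m => a m.1)
    convert this using 2
    · funext m
      by_cases hm : m = i
      · subst hm
        simp [Function.update_of_ne (Ne.symm h), ha]
      · simp only [dif_neg hm]
        by_cases hk : m = k
        · subst hk
          simp [Function.update_self]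
        · rw [Function.update_of_ne hk, Function.update_of_ne]
          simp [Subtype.ext_iff, hk]
    · funext m
      by_cases hm : m = i
      · subst hm; simp [ha]
      · simp [dif_neg hm]
  · intro H y
    set a : ι → Bool := fun m => if hm : m = i then b else y ⟨m, hm⟩ with hadef
    have ha : a i = b := by simp [hadef]
    have := H a ha
    convert this using 2
    · funext m
      by_cases hm : m = i
      · subst hm
        simp [hadef, Function.update_of_ne (Ne.symm h)]
      · simp only [dif_neg hm]
        by_cases hk : m = k
        · subst hk
          have he : (⟨m, hm⟩ : {x // x ≠ i}) = ⟨m, h⟩ := rfl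
          rw [he, Function.update_self, Function.update_self]
          have : a m = y ⟨m, h⟩ := by simp [hadef, dif_neg hm]
          rw [this]
        · rw [Function.update_of_ne hk, Function.update_of_ne (by simp [Subtype.ext_iff, hk])]
          simp [hadef, dif_neg hm]

/-- Transitivity: for pairwise distinct `i, j, k`, if `j ∈ U(f_{i b_i})` and
`k ∈ U(f_{j b_j})`, then `k ∈ U(f_{i b_i})`. -/
theorem useless_trans (n : ℕ) (f : (Fin n → Bool) → Bool) (i j k : Fin n)
    (hij : i ≠ j) (hik : i ≠ k) (hjk : j ≠ k) (bi bj : Bool)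
    (h1 : UselessIn f i bi j) (h2 : UselessIn f j bj k) :
    UselessIn f i bi k := by
  obtain ⟨hji, H1⟩ := h1
  obtain ⟨hkj, H2⟩ := h2
  rw [useless_iff] at H1 H2
  refine ⟨hik.symm, (useless_iff f i bi k hik.symm).mpr ?_⟩
  -- H1 : flip j invariance when x_i = bi ; upgrade to arbitrary value at j
  have H1' : ∀ a : Fin n → Bool, a i = bi → ∀ c, f (Function.update a j c) = f a := by
    intro a ha c
    by_cases hc : c = a j
    · rw [hc, Function.update_eq_self]
    · have : c = !a j := by revert hc; cases c <;> cases a j <;> simp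
      rw [this]; exact H1 a ha
  intro a ha
  set a1 : Fin n → Bool := Function.update a j bj with ha1
  have ha1i : a1 i = bi := by rw [ha1, Function.update_of_ne hij]; exact ha
  have ha1j : a1 j = bj := by simp [ha1]
  have e1 : f a1 = f a := H1' a ha bj
  have e2 : f (Function.update a1 k (!a1 k)) = f a1 := H2 a1 ha1j
  have hak : a1 k = a k := by rw [ha1, Function.update_of_ne (Ne.symm hjk)]
  have e3 : Function.update a1 k (!a1 k) = Function.update (Function.update a k (!a k)) j bj := by
    rw [ha1, Function.update_of_ne (Ne.symm hjk), Function.update_comm hjk]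
  have hflipi : (Function.update a k (!a k)) i = bi := by
    rw [Function.update_of_ne hik]; exact ha
  calc f (Function.update a k (!a k))
      = f (Function.update (Function.update a k (!a k)) j bj) := (H1' _ hflipi bj).symm
    _ = f (Function.update a1 k (!a1 k)) := by rw [e3]
    _ = f a1 := e2
    _ = f a := e1
end

section
/- (Transitivity, path version) Let f : {0,1}^n → {0,1} be a Boolean function, let t ≥ 1, and let i, j_1, …, j_t ∈ [n] be pairwise distinct indices. Suppose there are bits b_0, b_1, …, b_{t−1} ∈ {0,1} such that j_1 ∈ U(f_{i b_0}) and j_{s+1} ∈ U(f_{j_s b_s}) for every 1 ≤ s ≤ t−1. Then {j_1, …, j_t} ⊆ U(f_{i b_0}). -/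
lemma restrict_update_eq {ι : Type*} [DecidableEq ι] (f : (ι → Bool) → Bool) (j k : ι)
    (b : Bool) (hk : k ≠ j) (a : ι → Bool) (haj : a j = b) (v : Bool) :
    restrictBit f j b (Function.update (fun m : {m : ι // m ≠ j} => a m.1) ⟨k, hk⟩ v)
      = f (Function.update a k v) := by
  unfold restrictBit
  congr 1
  funext l
  by_cases hl : l = j
  · subst hl
    rw [dif_pos rfl, Function.update_apply, if_neg (Ne.symm hk), haj]
  · simp only [dif_neg hl, Function.update_apply]
    by_cases hlk : l = k
    · subst hlk
      simp [Subtype.ext_iff]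
    · rw [if_neg hlk, if_neg (by simp [Subtype.ext_iff, hlk])]

lemma restrict_eq {ι : Type*} [DecidableEq ι] (f : (ι → Bool) → Bool) (j : ι)
    (b : Bool) (a : ι → Bool) (haj : a j = b) :
    restrictBit f j b (fun m : {m : ι // m ≠ j} => a m.1) = f a := by
  unfold restrictBit
  congr 1
  funext l
  by_cases hl : l = j
  · subst hl; simp [haj]
  · simp [hl]

lemma uselessIn_iff {ι : Type*} [DecidableEq ι] (f : (ι → Bool) → Bool) (j k : ι) (b : Bool)
    (hk : k ≠ j) :
    UselessIn f j b k ↔ ∀ a : ι → Bool, a j = b →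
      f (Function.update a k (!a k)) = f a := by
  constructor
  · rintro ⟨h, hd⟩ a haj
    simp only [BoolDependsOn, not_exists, not_not] at hd
    have := hd (fun m : {m : ι // m ≠ j} => a m.1)
    rwa [restrict_update_eq f j k b h a haj, restrict_eq f j b a haj] at this
  · intro H
    refine ⟨hk, ?_⟩
    intro hd
    simp only [BoolDependsOn] at hd
    obtain ⟨y, hy⟩ := hd
    apply hy
    set a : ι → Bool := fun l => if h : l = j then b else y ⟨l, h⟩ with ha
    have haj : a j = b := by simp [ha]
    have hya : y = fun m : {m : ι // m ≠ j} => a m.1 := by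
      funext m; simp [ha, m.2]
    rw [hya, restrict_update_eq f j k b hk a haj, restrict_eq f j b a haj]
    exact H a haj

lemma trans_core {ι : Type*} [DecidableEq ι] (f : (ι → Bool) → Bool) (i k m : ι)
    (b0 c : Bool) (hik : i ≠ k) (him : i ≠ m) (hkm : k ≠ m)
    (h1 : ∀ a, a i = b0 → f (Function.update a k (!a k)) = f a)
    (h2 : ∀ a, a k = c → f (Function.update a m (!a m)) = f a) :
    ∀ a, a i = b0 → f (Function.update a m (!a m)) = f a := by
  intro a hai
  by_cases hc : a k = c
  · exact h2 a hc
  · have hcv : c = !a k := by cases h : a k <;> cases c <;> simp_all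
    set a' := Function.update a k c with ha'
    have hfa' : f a' = f a := by rw [ha', hcv]; exact h1 a hai
    have ha'i : a' i = b0 := by rw [ha', Function.update_of_ne hik]; exact hai
    have ha'k : a' k = c := by rw [ha', Function.update_self]
    have ha'm : a' m = a m := by rw [ha', Function.update_of_ne hkm.symm]
    have h2' : f (Function.update a' m (!a' m)) = f a' := h2 a' ha'k
    set B := Function.update a m (!a m) with hB
    have hBi : B i = b0 := by rw [hB, Function.update_of_ne him]; exact hai
    have hBk : B k = a k := by rw [hB, Function.update_of_ne (fun h => hkm h)]
    have hcomm : Function.update a' m (!a' m) = Function.update B k c := by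
      rw [ha'm, ha', hB, Function.update_comm hkm]
    have h1B : f (Function.update B k (!B k)) = f B := h1 B hBi
    rw [hBk, ← hcv] at h1B
    rw [hcomm] at h2'
    rw [← h1B, h2', hfa']

/-- Transitivity, path version: if `i, j 0, …, j (t-1)` are pairwise distinct,
`j 0 ∈ U(f_{i, b 0})` and `j (s+1) ∈ U(f_{j s, b (s+1)})` for all `s` with `s + 1 < t`,
then every `j s` belongs to `U(f_{i, b 0})`. -/
theorem useless_trans_path (n t : ℕ) (ht : 0 < t) (f : (Fin n → Bool) → Bool)
    (i : Fin n) (j : Fin t → Fin n) (b : Fin t → Bool)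
    (hinj : Function.Injective j) (hji : ∀ s : Fin t, j s ≠ i)
    (h0 : UselessIn f i (b ⟨0, ht⟩) (j ⟨0, ht⟩))
    (hstep : ∀ (s : ℕ) (hs : s + 1 < t),
      UselessIn f (j ⟨s, Nat.lt_of_succ_lt hs⟩) (b ⟨s + 1, hs⟩) (j ⟨s + 1, hs⟩)) :
    ∀ s : Fin t, UselessIn f i (b ⟨0, ht⟩) (j s) := by
  set b0 := b ⟨0, ht⟩ with hb0
  have key : ∀ (s : ℕ) (hs : s < t), ∀ a : Fin n → Bool, a i = b0 →
      f (Function.update a (j ⟨s, hs⟩) (!a (j ⟨s, hs⟩))) = f a := by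
    intro s
    induction s with
    | zero =>
      intro hs
      exact (uselessIn_iff f i (j ⟨0, hs⟩) b0 (hji _)).mp h0
    | succ s ih =>
      intro hs
      have hs' : s < t := Nat.lt_of_succ_lt hs
      have h1 := ih hs'
      have h2 := (uselessIn_iff f (j ⟨s, hs'⟩) (j ⟨s + 1, hs⟩) (b ⟨s + 1, hs⟩)
        (fun h => by have := hinj h; simp at this)).mp (hstep s hs)
      exact trans_core f i (j ⟨s, hs'⟩) (j ⟨s + 1, hs⟩) b0 (b ⟨s + 1, hs⟩)
        (Ne.symm (hji _)) (Ne.symm (hji _))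
        (fun h => by have := hinj h; simp at this) h1 h2
  intro s
  exact (uselessIn_iff f i (j s) b0 (hji s)).mpr (by
    have := key s.1 s.2
    simpa using this)
end

section
/- (Closure property) Let f : {0,1}^n → {0,1} be a Boolean function, i ∈ [n], and b ∈ {0,1}. Then U1(f, U(f_{ib})) ⊆ U(f_{ib}) ∪ {i}. -/
/-- `U(f_{ib})` as a set of indices in `[n]`. -/
def Uset {n : ℕ} (f : (Fin n → Bool) → Bool) (i : Fin n) (b : Bool) : Set (Fin n) :=
  {k | UselessIn f i b k}

/-- `U1(f, S) = ⋃_{j ∈ S} (U(f_{j0}) ∪ U(f_{j1}))`. -/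
def U1 {n : ℕ} (f : (Fin n → Bool) → Bool) (S : Set (Fin n)) : Set (Fin n) :=
  ⋃ j ∈ S, (Uset f j false ∪ Uset f j true)

lemma ext_update {ι : Type*} [DecidableEq ι] (j : ι) (c : Bool) (y : {i : ι // i ≠ j} → Bool)
    (k : ι) (h : k ≠ j) (v : Bool) :
    (fun i => if hi : i = j then c else Function.update y ⟨k, h⟩ v ⟨i, hi⟩)
      = Function.update (fun i => if hi : i = j then c else y ⟨i, hi⟩) k v := by
  funext i'
  by_cases hi : i' = j
  · subst hi
    rw [dif_pos rfl, Function.update_of_ne (Ne.symm h), dif_pos rfl]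
  · rw [dif_neg hi]
    by_cases hk : i' = k
    · subst hk
      rw [show (⟨i', hi⟩ : {i : ι // i ≠ j}) = ⟨i', h⟩ from rfl]
      simp
    · rw [Function.update_of_ne (fun hh => hk (Subtype.ext_iff.mp hh)),
        Function.update_of_ne hk, dif_neg hi]

lemma notDepends_iff {ι : Type*} [DecidableEq ι] (f : (ι → Bool) → Bool) (j : ι) (c : Bool)
    (k : ι) (h : k ≠ j) :
    ¬ BoolDependsOn (restrictBit f j c) ⟨k, h⟩ ↔
      ∀ a : ι → Bool, a j = c → ∀ v, f (Function.update a k v) = f a := by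
  unfold BoolDependsOn
  push_neg
  constructor
  · intro H a ha v
    by_cases hv : v = a k
    · subst hv; rw [Function.update_eq_self]
    · have hv' : v = !a k := by cases hav : a k <;> rw [hav] at hv <;> simp_all
      subst hv'
      set y : {i : ι // i ≠ j} → Bool := fun p => a p.1 with hy
      have h1 : restrictBit f j c y = f a := by
        unfold restrictBit
        congr 1
        funext i'
        by_cases hi : i' = j
        · subst hi; rw [dif_pos rfl, ha]
        · rw [dif_neg hi]
      have h2 : restrictBit f j c (Function.update y ⟨k, h⟩ (!y ⟨k, h⟩))
          = f (Function.update a k (!a k)) := by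
        unfold restrictBit
        rw [ext_update]
        congr 1
        funext i'
        by_cases hi : i' = j
        · subst hi
          rw [Function.update_of_ne (Ne.symm h), Function.update_of_ne (Ne.symm h),
            dif_pos rfl, ha]
        · by_cases hk : i' = k
          · subst hk; simp [hy]
          · rw [Function.update_of_ne hk, Function.update_of_ne hk, dif_neg hi]
      have := H y
      rw [h1, h2] at this
      exact this
  · intro H y
    set a : ι → Bool := fun i' => if hi : i' = j then c else y ⟨i', hi⟩ with ha
    have haj : a j = c := by simp [ha]
    have h1 : restrictBit f j c y = f a := rfl
    have h2 : restrictBit f j c (Function.update y ⟨k, h⟩ (!y ⟨k, h⟩))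
        = f (Function.update a k (!y ⟨k, h⟩)) := by
      unfold restrictBit; rw [ext_update]
    rw [h1, h2, H a haj]

/-- Closure property: `U1(f, U(f_{ib})) ⊆ U(f_{ib}) ∪ {i}`. -/
theorem closure_property (n : ℕ) (f : (Fin n → Bool) → Bool) (i : Fin n) (b : Bool) :
    U1 f (Uset f i b) ⊆ Uset f i b ∪ {i} := by
  intro k hk
  simp only [U1, Set.mem_iUnion, Set.mem_union] at hk
  obtain ⟨j, hjU, hkU⟩ := hk
  obtain ⟨hji, hjnd⟩ := hjU
  -- extract c such that k is useless in f_{j c}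
  obtain ⟨c, hki', hknd⟩ : ∃ c, ∃ h : k ≠ j, ¬ BoolDependsOn (restrictBit f j c) ⟨k, h⟩ := by
    rcases hkU with h | h
    · exact ⟨false, h⟩
    · exact ⟨true, h⟩
  by_cases hki : k = i
  · right; exact hki
  · left
    refine ⟨hki, ?_⟩
    rw [notDepends_iff] at hjnd hknd ⊢
    intro a hai v
    have hkj : k ≠ j := hki'
    -- step 1: set x_j := c
    have s1 : f (Function.update a k v) = f (Function.update (Function.update a k v) j c) :=
      (hjnd (Function.update a k v) (by rw [Function.update_of_ne (Ne.symm hki)]; exact hai) c).symm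
    have comm : Function.update (Function.update a k v) j c
        = Function.update (Function.update a j c) k v := Function.update_comm hkj v c a
    have s2 : f (Function.update (Function.update a j c) k v) = f (Function.update a j c) :=
      hknd (Function.update a j c) (Function.update_self j c a) v
    have s3 : f (Function.update a j c) = f a := by
      have := hjnd a hai c
      exact this
    rw [s1, comm, s2, s3]
end
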